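/- Let k be an arbitrary field, X = (X_{ij}) a 3×3 matrix of indeterminates, and A = k[X]/I_2 the quotient of the polynomial ring by the ideal generated by all 2×2 minors of X, with x_{ij} the images of X_{ij}. Then for every integer n ≥ 2, the element x_{33} is a nonzerodivisor on A/(x_{11}^n, x_{12}^n). -/

import Mathlib

/-!
Common definitions: Tor and Ext functors are taken from Mathlib's category-theoretic
derived functors on `ModuleCat R`.  Projective dimension, depth, Gorenstein, etc. are
defined via their standard homological characterizations.
-/

open CategoryTheory Limits IsLocalRing

universe u

set_option maxHeartbeats 1000000
set_option synthInstance.maxHeartbeats 400000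

noncomputable section

/-- Vanishing of `Tor_i^R(M, N)`. -/
def TorVanishes (R : Type u) [CommRing R] (M N : ModuleCat.{u} R) (i : ℕ) : Prop :=
  IsZero (((Tor (ModuleCat.{u} R) i).obj M).obj N)

/-- `M` has projective dimension at most `n`: `Ext^i_R(M, -) = 0` for all `i > n`. -/
def ProjDimLE (R : Type u) [CommRing R] (M : Type u) [AddCommGroup M] [Module R M]
    (n : ℕ) : Prop :=
  ∀ (N : ModuleCat.{u} R) (i : ℕ), n < i →
    IsZero (((Ext R (ModuleCat.{u} R) i).obj (Opposite.op (ModuleCat.of R M))).obj N)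

/-- `M` has finite projective dimension over `R`. -/
def HasFinProjDim (R : Type u) [CommRing R] (M : Type u) [AddCommGroup M] [Module R M] : Prop :=
  ∃ n : ℕ, ProjDimLE R M n

/-- The projective dimension of `M` as an element of `ℕ∞` (`⊤` if infinite). -/
def projDim (R : Type u) [CommRing R] (M : Type u) [AddCommGroup M] [Module R M] : ℕ∞ :=
  sInf ((fun n : ℕ => (n : ℕ∞)) '' {n : ℕ | ProjDimLE R M n})

/-- An `R`-module `N` is strongly rigid if for every `i ≥ 1` and every finitely generated
`R`-module `M`, the vanishing of `Tor_i^R(M, N)` implies that `M` has finite projective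
dimension. -/
def StronglyRigid (R : Type u) [CommRing R] (N : Type u) [AddCommGroup N] [Module R N] : Prop :=
  ∀ (M : Type u) [AddCommGroup M] [Module R M], Module.Finite R M →
    ∀ i : ℕ, 1 ≤ i → TorVanishes R (ModuleCat.of R M) (ModuleCat.of R N) i →
      HasFinProjDim R M

/-- `{}^{f^n}R` : the ring `R` viewed as an `R`-module via the `n`-th iterate of the Frobenius
endomorphism, i.e. `r • s = r ^ (p ^ n) * s`. -/
def FrobModule (R : Type u) [CommRing R] (p : ℕ) [Fact p.Prime] [CharP R p] (n : ℕ) :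
    Type u := R

instance (R : Type u) [CommRing R] (p : ℕ) [Fact p.Prime] [CharP R p] (n : ℕ) :
    AddCommGroup (FrobModule R p n) := inferInstanceAs (AddCommGroup R)

instance (R : Type u) [CommRing R] (p : ℕ) [Fact p.Prime] [CharP R p] (n : ℕ) :
    Module R (FrobModule R p n) := Module.compHom R (iterateFrobenius R p n)

/-- The `n`-th Frobenius functor `F^n(M) = M ⊗_R {}^{f^n}R`, i.e. base change along the
`n`-th iterate of the Frobenius endomorphism, viewed as an `R`-module via the target
(right-hand) copy of `R`. -/
def frobF (R : Type u) [CommRing R] (p : ℕ) [Fact p.Prime] [CharP R p] (n : ℕ)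
    (M : ModuleCat.{u} R) : ModuleCat.{u} R :=
  (ModuleCat.extendScalars (iterateFrobenius R p n)).obj M

/-- Depth of a module with respect to an ideal `I` (Rees' characterization):
`depth_I M = inf { i | Ext^i_R(R/I, M) ≠ 0 }`, an element of `ℕ∞`. -/
def idealDepth (R : Type u) [CommRing R] (I : Ideal R) (M : Type u) [AddCommGroup M]
    [Module R M] : ℕ∞ :=
  sInf ((fun i : ℕ => (i : ℕ∞)) ''
    {i : ℕ | ¬ IsZero (((Ext R (ModuleCat.{u} R) i).obj
      (Opposite.op (ModuleCat.of R (R ⧸ I)))).obj (ModuleCat.of R M))})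

/-- The depth of a module over a local ring. -/
def moduleDepth (R : Type u) [CommRing R] [IsLocalRing R] (M : Type u) [AddCommGroup M]
    [Module R M] : ℕ∞ :=
  idealDepth R (maximalIdeal R) M

/-- The dimension of a module: the Krull dimension of its support. -/
def moduleDim (R : Type u) [CommRing R] (M : Type u) [AddCommGroup M] [Module R M] :
    WithBot ℕ∞ :=
  Order.krullDim (Module.support R M)

/-- A module over a local ring is Cohen–Macaulay if its depth equals its dimension. -/
def IsCMModule (R : Type u) [CommRing R] [IsLocalRing R] (M : Type u) [AddCommGroup M]
    [Module R M] : Prop :=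
  (moduleDepth R M : WithBot ℕ∞) = moduleDim R M

/-- A Gorenstein local ring: a Noetherian local ring such that `R` has finite injective
dimension as a module over itself (equivalently, `Ext^i_R(-, R) = 0` for all `i` large). -/
def IsGorensteinLocalRing (R : Type u) [CommRing R] : Prop :=
  IsNoetherianRing R ∧ IsLocalRing R ∧ ∃ n : ℕ, ∀ (M : ModuleCat.{u} R) (i : ℕ), n < i →
    IsZero (((Ext R (ModuleCat.{u} R) i).obj (Opposite.op M)).obj (ModuleCat.of R R))

/-- A regular local ring: a Noetherian local ring whose maximal ideal is generated by
`dim R` elements. -/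
def IsRegularLocal (R : Type u) [CommRing R] : Prop :=
  IsNoetherianRing R ∧ ∃ _h : IsLocalRing R, ∃ s : Finset R,
    Ideal.span (s : Set R) = maximalIdeal R ∧ ((s.card : ℕ∞) : WithBot ℕ∞) = ringKrullDim R

/-- The infinite projective dimension locus of `M`:
`IPD(M) = { p | pd_{R_p} M_p = ∞ }`. -/
def IPD (R : Type u) [CommRing R] (M : Type u) [AddCommGroup M] [Module R M] :
    Set (PrimeSpectrum R) :=
  {P | ¬ HasFinProjDim (Localization.AtPrime P.asIdeal)
    (LocalizedModule P.asIdeal.primeCompl M)}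

/-- The finite projective dimension locus of `M`. -/
def FPD (R : Type u) [CommRing R] (M : Type u) [AddCommGroup M] [Module R M] :
    Set (PrimeSpectrum R) :=
  {P | HasFinProjDim (Localization.AtPrime P.asIdeal)
    (LocalizedModule P.asIdeal.primeCompl M)}

/-- An `R`-module `N` is locally strongly rigid if `N_P` is a strongly rigid `R_P`-module for
every prime ideal `P`. -/
def LocallyStronglyRigid (R : Type u) [CommRing R] (N : Type u) [AddCommGroup N]
    [Module R N] : Prop :=
  ∀ P : PrimeSpectrum R, StronglyRigid (Localization.AtPrime P.asIdeal)
    (LocalizedModule P.asIdeal.primeCompl N)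

/-- The `n`-th strong rigidity locus of `R`: the primes `P` such that `({}^{f^n}R)_P` is a
strongly rigid `R_P`-module. -/
def SRLocus (R : Type u) [CommRing R] (p : ℕ) [Fact p.Prime] [CharP R p] (n : ℕ) :
    Set (PrimeSpectrum R) :=
  {P | StronglyRigid (Localization.AtPrime P.asIdeal)
    (LocalizedModule P.asIdeal.primeCompl (FrobModule R p n))}

/-- The length of a module: the Krull dimension of its lattice of submodules
(`⊤` when the module does not have finite length). -/
def moduleLength (R : Type u) [CommRing R] (M : Type u) [AddCommGroup M] [Module R M] : ℕ∞ :=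
  WithBot.unbotD 0 (Order.krullDim (Submodule R M))

/-- Serre's condition `(S_k)`: `depth M_p ≥ min(k, dim M_p)` for all primes `p` in the
support of `M`. -/
def SerreCondS (R : Type u) [CommRing R] (M : Type u) [AddCommGroup M] [Module R M]
    (k : ℕ) : Prop :=
  ∀ P : PrimeSpectrum R, P ∈ Module.support R M →
    min ((k : ℕ∞) : WithBot ℕ∞)
        (moduleDim (Localization.AtPrime P.asIdeal) (LocalizedModule P.asIdeal.primeCompl M))
      ≤ (moduleDepth (Localization.AtPrime P.asIdeal)
          (LocalizedModule P.asIdeal.primeCompl M) : WithBot ℕ∞)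

theorem charP_quotient_of_ne_top {R : Type u} [CommRing R] (p : ℕ) [Fact p.Prime] [CharP R p]
    (I : Ideal R) (h : I ≠ ⊤) : CharP (R ⧸ I) p := by
  haveI : Nontrivial (R ⧸ I) := Ideal.Quotient.nontrivial_iff.mpr h
  have h0 : (p : R ⧸ I) = 0 := by
    rw [← map_natCast (Ideal.Quotient.mk I) p, CharP.cast_eq_zero R p, map_zero]
  rcases (Nat.Prime.eq_one_or_self_of_dvd Fact.out _ (ringChar.dvd h0)) with h1 | h1
  · haveI := ringChar.of_eq h1
    exact absurd rfl (CharP.char_ne_one (R ⧸ I) 1)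
  · exact ringChar.of_eq h1

instance charP_localization_atPrime {R : Type u} [CommRing R] (p : ℕ) [Fact p.Prime]
    [CharP R p] (P : Ideal R) [P.IsPrime] : CharP (Localization.AtPrime P) p := by
  have h0 : (p : Localization.AtPrime P) = 0 := by
    rw [← map_natCast (algebraMap R (Localization.AtPrime P)) p, CharP.cast_eq_zero R p,
      map_zero]
  rcases (Nat.Prime.eq_one_or_self_of_dvd Fact.out _ (ringChar.dvd h0)) with h1 | h1
  · haveI := ringChar.of_eq h1
    exact absurd rfl (CharP.char_ne_one (Localization.AtPrime P) 1)
  · exact ringChar.of_eq h1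

open MvPolynomial in
/-- The nine 2×2 minors of the generic 3×3 matrix `X = (X_{ij})`. -/
def genericMinors (k : Type u) [CommRing k] : Set (MvPolynomial (Fin 3 × Fin 3) k) :=
  {f | ∃ i j a b : Fin 3, i < j ∧ a < b ∧
    f = X (i, a) * X (j, b) - X (i, b) * X (j, a)}

/-- The ideal `I_2(X)` generated by the 2×2 minors of the generic 3×3 matrix. -/
def DetIdeal (k : Type u) [CommRing k] : Ideal (MvPolynomial (Fin 3 × Fin 3) k) :=
  Ideal.span (genericMinors k)

/-- The determinantal ring `A = k[X]/I_2(X)`. -/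
abbrev DetRing (k : Type u) [CommRing k] : Type u :=
  MvPolynomial (Fin 3 × Fin 3) k ⧸ DetIdeal k

/-- The image `x_{ij}` of the variable `X_{ij}` in the determinantal ring. -/
def xvar (k : Type u) [CommRing k] (i j : Fin 3) : DetRing k :=
  Ideal.Quotient.mk (DetIdeal k) (MvPolynomial.X (i, j))

instance detRing_charP (k : Type u) [CommRing k] (p : ℕ) [Fact p.Prime] [CharP k p] :
    CharP (DetRing k) p := by
  apply CharP.quotient' p
  intro x hx
  have hker : DetIdeal k ≤
      RingHom.ker (MvPolynomial.eval (fun _ : Fin 3 × Fin 3 => (0 : k))) := by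
    rw [DetIdeal, Ideal.span_le]
    rintro f ⟨i, j, a, b, hij, hab, rfl⟩
    simp [RingHom.mem_ker]
  have h1 : ((x : k)) = 0 := by
    have := hker hx
    rwa [RingHom.mem_ker, map_natCast] at this
  calc ((x : ℕ) : MvPolynomial (Fin 3 × Fin 3) k)
      = MvPolynomial.C ((x : ℕ) : k) := (map_natCast (MvPolynomial.C) x).symm
    _ = 0 := by rw [h1, map_zero]

/-- The homogeneous maximal ideal `(x_{ij})` of the determinantal ring. -/
def detMax (k : Type u) [CommRing k] : Ideal (DetRing k) :=
  Ideal.span (Set.range fun ij : Fin 3 × Fin 3 => xvar k ij.1 ij.2)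

theorem detIdeal_le_ker (k : Type u) [CommRing k] :
    DetIdeal k ≤ RingHom.ker (MvPolynomial.eval (fun _ : Fin 3 × Fin 3 => (0 : k))) := by
  rw [DetIdeal, Ideal.span_le]
  rintro f ⟨i, j, a, b, hij, hab, rfl⟩
  simp [RingHom.mem_ker]

instance detMax_isPrime (k : Type u) [Field k] : (detMax k).IsPrime := by
  classical
  set ψ : DetRing k →+* k :=
    Ideal.Quotient.lift (DetIdeal k) (MvPolynomial.eval (fun _ : Fin 3 × Fin 3 => (0 : k)))
      (fun a ha => RingHom.mem_ker.mp (detIdeal_le_ker k ha)) with hψ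
  have h : detMax k = RingHom.ker ψ := by
    apply le_antisymm
    · rw [detMax, Ideal.span_le]
      rintro _ ⟨ij, rfl⟩
      simp [RingHom.mem_ker, hψ, xvar]
    · rintro g hg
      obtain ⟨f, rfl⟩ := Ideal.Quotient.mk_surjective g
      have hf : MvPolynomial.constantCoeff f = 0 := by
        have := hg
        rw [RingHom.mem_ker, hψ, Ideal.Quotient.lift_mk] at this
        rwa [MvPolynomial.eval_zero'] at this
      have hmem : f ∈ Ideal.span (MvPolynomial.X '' (Set.univ : Set (Fin 3 × Fin 3))) := by
        rw [MvPolynomial.mem_ideal_span_X_image]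
        intro m hm
        by_contra hnc
        push_neg at hnc
        have hm0 : m = 0 := by
          ext i
          exact hnc i (Set.mem_univ i)
        have := MvPolynomial.mem_support_iff.mp hm
        rw [hm0] at this
        exact this (by rwa [MvPolynomial.constantCoeff_eq] at hf)
      have hmap := Ideal.mem_map_of_mem (Ideal.Quotient.mk (DetIdeal k)) hmem
      rw [Ideal.map_span] at hmap
      have himg : (Ideal.Quotient.mk (DetIdeal k)) ''
          (MvPolynomial.X '' (Set.univ : Set (Fin 3 × Fin 3)))
          = Set.range fun ij : Fin 3 × Fin 3 => xvar k ij.1 ij.2 := by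
        ext y
        constructor
        · rintro ⟨_, ⟨ij, -, rfl⟩, rfl⟩
          exact ⟨ij, rfl⟩
        · rintro ⟨ij, rfl⟩
          exact ⟨MvPolynomial.X ij, ⟨ij, Set.mem_univ _, rfl⟩, rfl⟩
      rw [himg] at hmap
      exact hmap
  rw [h]
  exact RingHom.ker_isPrime ψ



set_option linter.all false

open MvPolynomial

namespace DetAux

variable (k : Type u) [CommRing k]

def margin (d : Fin 3 × Fin 3 →₀ ℕ) : (Fin 3 ⊕ Fin 3) →₀ ℕ :=
  Finsupp.equivFunOnFinite.symm
    (Sum.elim (fun i => ∑ j, d (i, j)) (fun j => ∑ i, d (i, j)))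

lemma margin_apply_inl (d : Fin 3 × Fin 3 →₀ ℕ) (i : Fin 3) :
    margin d (Sum.inl i) = ∑ j, d (i, j) := rfl

lemma margin_apply_inr (d : Fin 3 × Fin 3 →₀ ℕ) (j : Fin 3) :
    margin d (Sum.inr j) = ∑ i, d (i, j) := rfl

lemma margin_add (d e : Fin 3 × Fin 3 →₀ ℕ) : margin (d + e) = margin d + margin e := by
  ext x
  cases x with
  | inl i => simp [margin_apply_inl, Finset.sum_add_distrib]
  | inr j => simp [margin_apply_inr, Finset.sum_add_distrib]

lemma margin_single (i j : Fin 3) (m : ℕ) :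
    margin (Finsupp.single (i, j) m)
      = Finsupp.single (Sum.inl i) m + Finsupp.single (Sum.inr j) m := by
  ext x
  cases x with
  | inl i' =>
    simp only [margin_apply_inl, Finsupp.add_apply, Finsupp.single_apply]
    by_cases h : i = i'
    · subst h; simp [Finsupp.single_apply, Prod.ext_iff]
    · simp [Finsupp.single_apply, Prod.ext_iff, h, Ne.symm h]
  | inr j' =>
    simp only [margin_apply_inr, Finsupp.add_apply, Finsupp.single_apply]
    by_cases h : j = j'
    · subst h; simp [Finsupp.single_apply, Prod.ext_iff]
    · simp [Finsupp.single_apply, Prod.ext_iff, h, Ne.symm h]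

lemma minor_swap {i j a b : Fin 3} (hij : i ≠ j) (hab : a ≠ b) :
    Ideal.Quotient.mk (DetIdeal k) (X (i, a) * X (j, b))
      = Ideal.Quotient.mk (DetIdeal k) (X (i, b) * X (j, a)) := by
  rw [Ideal.Quotient.eq]
  rcases hij.lt_or_gt with h | h <;> rcases hab.lt_or_gt with h' | h'
  · exact Ideal.subset_span ⟨i, j, a, b, h, h', rfl⟩
  · have hg : (X (i, b) * X (j, a) - X (i, a) * X (j, b) : MvPolynomial (Fin 3 × Fin 3) k)
        ∈ DetIdeal k := Ideal.subset_span ⟨i, j, b, a, h, h', rfl⟩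
    have := (DetIdeal k).neg_mem hg
    convert this using 1; ring
  · have hg : (X (j, a) * X (i, b) - X (j, b) * X (i, a) : MvPolynomial (Fin 3 × Fin 3) k)
        ∈ DetIdeal k := Ideal.subset_span ⟨j, i, a, b, h, h', rfl⟩
    have := (DetIdeal k).neg_mem hg
    convert this using 1; ring
  · have hg : (X (j, b) * X (i, a) - X (j, a) * X (i, b) : MvPolynomial (Fin 3 × Fin 3) k)
        ∈ DetIdeal k := Ideal.subset_span ⟨j, i, b, a, h, h', rfl⟩
    convert hg using 1; ring

lemma fin3_exists_lt (f g : Fin 3 → ℕ) (h : ∑ x, f x = ∑ x, g x) (a : Fin 3)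
    (ha : g a < f a) : ∃ b, b ≠ a ∧ f b < g b := by
  rw [Fin.sum_univ_three, Fin.sum_univ_three] at h
  fin_cases a
  · have ha' : g 0 < f 0 := ha
    have : f 1 < g 1 ∨ f 2 < g 2 := by omega
    rcases this with h' | h'
    · exact ⟨1, by decide, h'⟩
    · exact ⟨2, by decide, h'⟩
  · have ha' : g 1 < f 1 := ha
    have : f 0 < g 0 ∨ f 2 < g 2 := by omega
    rcases this with h' | h'
    · exact ⟨0, by decide, h'⟩
    · exact ⟨2, by decide, h'⟩
  · have ha' : g 2 < f 2 := ha
    have : f 0 < g 0 ∨ f 1 < g 1 := by omega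
    rcases this with h' | h'
    · exact ⟨0, by decide, h'⟩
    · exact ⟨1, by decide, h'⟩

lemma margin_total (d : Fin 3 × Fin 3 →₀ ℕ) :
    ∑ x : Fin 3 × Fin 3, d x = ∑ i, margin d (Sum.inl i) := by
  simp only [margin_apply_inl]
  rw [Fintype.sum_prod_type]

lemma margin_balanced (d : Fin 3 × Fin 3 →₀ ℕ) :
    ∑ i, margin d (Sum.inl i) = ∑ j, margin d (Sum.inr j) := by
  simp only [margin_apply_inl, margin_apply_inr]
  exact Finset.sum_comm

lemma mk_monomial_congr :
    ∀ (N : ℕ) (d d' : Fin 3 × Fin 3 →₀ ℕ),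
      (∑ x : Fin 3 × Fin 3, (d x - d' x + (d' x - d x))) ≤ N → margin d = margin d' →
      Ideal.Quotient.mk (DetIdeal k) (monomial d 1)
        = Ideal.Quotient.mk (DetIdeal k) (monomial d' 1) := by
  intro N
  induction N with
  | zero =>
    intro d d' hN _
    have : ∀ x ∈ (Finset.univ : Finset (Fin 3 × Fin 3)),
        (d x - d' x + (d' x - d x)) = 0 := by
      have := Nat.le_zero.mp hN
      intro x hx
      exact Finset.sum_eq_zero_iff.mp this x hx
    have hdd : d = d' := by
      ext x
      have := this x (Finset.mem_univ x)
      omega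
    rw [hdd]
  | succ N ih =>
    intro d d' hN hm
    by_cases hdd : d = d'
    · rw [hdd]
    -- totals are equal
    have htot : ∑ x : Fin 3 × Fin 3, d x = ∑ x : Fin 3 × Fin 3, d' x := by
      rw [margin_total, margin_total, hm]
    -- find a cell where d exceeds d'
    have hex : ∃ x, d' x < d x := by
      by_contra hc
      push_neg at hc
      exact hdd (Finsupp.ext fun x =>
        ((Finset.sum_eq_sum_iff_of_le (fun i _ => hc i)).mp htot x
          (Finset.mem_univ x)))
    obtain ⟨⟨i, a⟩, hia⟩ := hex
    -- row step
    have hrow : ∑ j' : Fin 3, d (i, j') = ∑ j' : Fin 3, d' (i, j') := by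
      have := congrArg (fun μ : (Fin 3 ⊕ Fin 3) →₀ ℕ => μ (Sum.inl i)) hm
      simpa [margin_apply_inl] using this
    obtain ⟨b, hba, hb⟩ := fin3_exists_lt (fun j' => d (i, j')) (fun j' => d' (i, j')) hrow a hia
    -- column step
    have hcol : ∑ i' : Fin 3, d' (i', b) = ∑ i' : Fin 3, d (i', b) := by
      have := congrArg (fun μ : (Fin 3 ⊕ Fin 3) →₀ ℕ => μ (Sum.inr b)) hm
      simpa [margin_apply_inr] using this.symm
    obtain ⟨j, hji, hj⟩ := fin3_exists_lt (fun i' => d' (i', b)) (fun i' => d (i', b)) hcol i hb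
    have hij : i ≠ j := Ne.symm hji
    have hab : a ≠ b := Ne.symm hba
    -- the swap
    have n12 : ((i, a) : Fin 3 × Fin 3) ≠ (j, b) := fun h => hij (congrArg Prod.fst h)
    have n13 : ((i, a) : Fin 3 × Fin 3) ≠ (i, b) := fun h => hab (congrArg Prod.snd h)
    have n14 : ((i, a) : Fin 3 × Fin 3) ≠ (j, a) := fun h => hij (congrArg Prod.fst h)
    have n23 : ((j, b) : Fin 3 × Fin 3) ≠ (i, b) := fun h => hji (congrArg Prod.fst h)
    have n24 : ((j, b) : Fin 3 × Fin 3) ≠ (j, a) := fun h => hba (congrArg Prod.snd h)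
    have n34 : ((i, b) : Fin 3 × Fin 3) ≠ (j, a) := fun h => hij (congrArg Prod.fst h)
    set d₀ : Fin 3 × Fin 3 →₀ ℕ := Finsupp.equivFunOnFinite.symm
      (fun x => if (i, a) = x then d x - 1 else if (j, b) = x then d x - 1 else d x) with hd₀
    have hd₀x : ∀ x, d₀ x =
        if (i, a) = x then d x - 1 else if (j, b) = x then d x - 1 else d x := fun x => rfl
    set d₂ : Fin 3 × Fin 3 →₀ ℕ :=
      d₀ + Finsupp.single (i, b) 1 + Finsupp.single (j, a) 1 with hd₂
    have hd1 : 1 ≤ d (i, a) := by omega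
    have hd2 : 1 ≤ d (j, b) := by omega
    have key1 : d = d₀ + Finsupp.single (i, a) 1 + Finsupp.single (j, b) 1 := by
      ext x
      simp only [Finsupp.add_apply, Finsupp.single_apply, hd₀x]
      split_ifs with h1 h2 h3
      · exact absurd (h1.trans h2.symm) n12
      · subst h1; omega
      · subst h3; omega
      · omega
    -- margins agree
    have hmar : margin d₂ = margin d' := by
      rw [← hm, key1, hd₂, margin_add, margin_add, margin_add, margin_add,
        margin_single, margin_single, margin_single, margin_single]
      abel
    -- mk equal
    have hmk : Ideal.Quotient.mk (DetIdeal k) (monomial d 1)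
        = Ideal.Quotient.mk (DetIdeal k) (monomial d₂ 1) := by
      have e1 : monomial d (1 : k) = monomial d₀ 1 * (X (i, a) * X (j, b)) := by
        rw [key1]
        simp [X, monomial_mul, add_assoc]
      have e2 : monomial d₂ (1 : k) = monomial d₀ 1 * (X (i, b) * X (j, a)) := by
        rw [hd₂]
        simp [X, monomial_mul, add_assoc]
      calc Ideal.Quotient.mk (DetIdeal k) (monomial d 1)
          = Ideal.Quotient.mk (DetIdeal k) (monomial d₀ 1)
            * Ideal.Quotient.mk (DetIdeal k) (X (i, a) * X (j, b)) := by rw [e1]; exact map_mul _ _ _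
        _ = Ideal.Quotient.mk (DetIdeal k) (monomial d₀ 1)
            * Ideal.Quotient.mk (DetIdeal k) (X (i, b) * X (j, a)) := by
              rw [minor_swap k hij hab]
        _ = Ideal.Quotient.mk (DetIdeal k) (monomial d₂ 1) := by rw [e2]; exact (map_mul _ _ _).symm
    rw [hmk]
    -- distance decreased
    apply ih d₂ d' _ hmar
    -- value facts
    have hval : ∀ x, d₂ x =
        (if (i, a) = x then d x - 1 else if (j, b) = x then d x - 1 else d x)
          + (if (i, b) = x then 1 else 0) + (if (j, a) = x then 1 else 0) := by
      intro x
      rw [hd₂]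
      simp only [Finsupp.add_apply, Finsupp.single_apply, hd₀x]
    have hv1 : d₂ (i, a) = d (i, a) - 1 := by
      rw [hval]; simp [n12.symm, n13.symm, n14.symm, -Prod.mk.injEq]
    have hv2 : d₂ (i, b) = d (i, b) + 1 := by
      rw [hval]; simp [n13, n23, n34.symm, -Prod.mk.injEq]
    have hv3 : d₂ (j, a) = d (j, a) + 1 := by
      rw [hval]; simp [n14, n24, n34, -Prod.mk.injEq]
    have hv4 : d₂ (j, b) = d (j, b) - 1 := by
      rw [hval]; simp [n12, n23.symm, n24.symm, -Prod.mk.injEq]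
    have hvout : ∀ x, x ≠ (i, a) → x ≠ (i, b) → x ≠ (j, a) → x ≠ (j, b) → d₂ x = d x := by
      intro x h1 h2 h3 h4
      rw [hval]; simp [h1.symm, h2.symm, h3.symm, h4.symm, -Prod.mk.injEq]
    -- split the sums
    have hsub : ({(i, a), (i, b), (j, a), (j, b)} : Finset (Fin 3 × Fin 3)) ⊆ Finset.univ :=
      Finset.subset_univ _
    have hnm1 : ((i, a) : Fin 3 × Fin 3) ∉ ({(i, b), (j, a), (j, b)} : Finset (Fin 3 × Fin 3)) := by
      simp [Prod.ext_iff, hij, hab]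
    have hnm2 : ((i, b) : Fin 3 × Fin 3) ∉ ({(j, a), (j, b)} : Finset (Fin 3 × Fin 3)) := by
      simp [Prod.ext_iff, hij]
    have hnm3 : ((j, a) : Fin 3 × Fin 3) ∉ ({(j, b)} : Finset (Fin 3 × Fin 3)) := by
      simp [Prod.ext_iff, hab]
    have hsum : ∀ f : Fin 3 × Fin 3 → ℕ, ∑ x : Fin 3 × Fin 3, f x =
        (∑ x ∈ Finset.univ \ ({(i, a), (i, b), (j, a), (j, b)} : Finset (Fin 3 × Fin 3)), f x)
          + (f (i, a) + (f (i, b) + (f (j, a) + f (j, b)))) := by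
      intro f
      rw [← Finset.sum_sdiff hsub]
      congr 1
      rw [Finset.sum_insert hnm1, Finset.sum_insert hnm2, Finset.sum_insert hnm3,
        Finset.sum_singleton]
    rw [hsum (fun x => d₂ x - d' x + (d' x - d₂ x))]
    rw [hsum (fun x => d x - d' x + (d' x - d x))] at hN
    have hout : (∑ x ∈ Finset.univ \ ({(i, a), (i, b), (j, a), (j, b)} :
          Finset (Fin 3 × Fin 3)), (d₂ x - d' x + (d' x - d₂ x)))
        = ∑ x ∈ Finset.univ \ ({(i, a), (i, b), (j, a), (j, b)} :
          Finset (Fin 3 × Fin 3)), (d x - d' x + (d' x - d x)) := by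
      apply Finset.sum_congr rfl
      intro x hx
      simp only [Finset.mem_sdiff, Finset.mem_insert, Finset.mem_singleton] at hx
      push_neg at hx
      rw [hvout x hx.2.1 hx.2.2.1 hx.2.2.2.1 hx.2.2.2.2]
    rw [hout, hv1, hv2, hv3, hv4]
    clear_value d₀ d₂
    clear hd₀x hval hvout hsum hd₀ hd₂ key1 hmar hmk hm hdd ih hsub hnm1 hnm2 hnm3 hout htot hrow hcol
    omega

/-- the Segre map -/
def phi : MvPolynomial (Fin 3 × Fin 3) k →ₐ[k] MvPolynomial (Fin 3 ⊕ Fin 3) k :=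
  aeval (fun ij => X (Sum.inl ij.1) * X (Sum.inr ij.2))

lemma phi_monomial (d : Fin 3 × Fin 3 →₀ ℕ) (c : k) :
    phi k (monomial d c) = monomial (margin d) c := by
  induction d using Finsupp.induction with
  | zero =>
    have : margin 0 = 0 := by ext x; cases x <;> simp [margin_apply_inl, margin_apply_inr]
    rw [this]
    simp only [monomial_zero', phi, aeval_C, algebraMap_eq]
  | single_add a m d ha hm ih =>
    obtain ⟨i, j⟩ := a
    have h1 : monomial (Finsupp.single (i, j) m + d) c
        = monomial (Finsupp.single (i, j) m) 1 * monomial d c := by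
      rw [monomial_mul, one_mul]
    rw [h1, map_mul, ih, margin_add, ← one_mul c, ← monomial_mul]
    congr 1
    rw [margin_single]
    have h2 : monomial (Finsupp.single (i, j) m) (1 : k) = X (i, j) ^ m := by
      rw [X_pow_eq_monomial]
    rw [h2, map_pow]
    have h3 : phi k (X (i, j)) = X (Sum.inl i) * X (Sum.inr j) := by
      simp [phi]
    rw [h3]
    have : (X (Sum.inl i) * X (Sum.inr j) : MvPolynomial (Fin 3 ⊕ Fin 3) k)
        = monomial (Finsupp.single (Sum.inl i) 1 + Finsupp.single (Sum.inr j) 1) 1 := by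
      rw [X, X, monomial_mul, one_mul]
    rw [this, monomial_pow, one_pow, smul_add]
    congr 1 <;> rw [Finsupp.smul_single] <;> simp
    rw [one_mul]

lemma coeff_phi (p : MvPolynomial (Fin 3 × Fin 3) k) (μ : (Fin 3 ⊕ Fin 3) →₀ ℕ) :
    coeff μ (phi k p) = ∑ d ∈ p.support.filter (fun d => margin d = μ), coeff d p := by
  conv_lhs => rw [p.as_sum]
  rw [map_sum, coeff_sum]
  rw [Finset.sum_filter]
  apply Finset.sum_congr rfl
  intro d _
  rw [phi_monomial, coeff_monomial]

/-- kernel of phi is contained in the determinantal ideal -/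
lemma mk_eq_zero_of_phi_eq_zero (p : MvPolynomial (Fin 3 × Fin 3) k) (hp : phi k p = 0) :
    Ideal.Quotient.mk (DetIdeal k) p = 0 := by
  classical
  set Q : (Fin 3 × Fin 3 →₀ ℕ) → MvPolynomial (Fin 3 × Fin 3) k ⧸ DetIdeal k :=
    fun d => Ideal.Quotient.mk (DetIdeal k) (monomial d (1 : k)) with hQdef
  have hQ : ∀ d d', margin d = margin d' → Q d = Q d' := fun d d' h =>
    mk_monomial_congr k _ d d' le_rfl h
  set g : ((Fin 3 ⊕ Fin 3) →₀ ℕ) → MvPolynomial (Fin 3 × Fin 3) k ⧸ DetIdeal k :=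
    fun μ => if h : ∃ d, margin d = μ then Q h.choose else 0 with hgdef
  have hg : ∀ d, Q d = g (margin d) := by
    intro d
    have hex : ∃ d', margin d' = margin d := ⟨d, rfl⟩
    rw [hgdef]
    simp only [dif_pos hex]
    exact (hQ _ _ hex.choose_spec).symm
  have h1 : Ideal.Quotient.mk (DetIdeal k) p
      = ∑ d ∈ p.support, Ideal.Quotient.mk (DetIdeal k) (C (coeff d p)) * g (margin d) := by
    conv_lhs => rw [p.as_sum]
    rw [map_sum]
    apply Finset.sum_congr rfl
    intro d _
    rw [← hg d, hQdef, ← map_mul, C_mul_monomial, mul_one]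
  rw [h1, ← Finset.sum_fiberwise_of_maps_to
    (fun d hd => Finset.mem_image_of_mem margin hd)
    (fun d => Ideal.Quotient.mk (DetIdeal k) (C (coeff d p)) * g (margin d))]
  apply Finset.sum_eq_zero
  intro μ hμ
  have he : ∀ d ∈ p.support.filter (fun d => margin d = μ),
      Ideal.Quotient.mk (DetIdeal k) (C (coeff d p)) * g (margin d)
        = Ideal.Quotient.mk (DetIdeal k) (C (coeff d p)) * g μ := by
    intro d hd
    rw [(Finset.mem_filter.mp hd).2]
  rw [Finset.sum_congr rfl he, ← Finset.sum_mul, ← map_sum, ← map_sum]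
  have hc : ∑ d ∈ p.support.filter (fun d => margin d = μ), coeff d p = 0 := by
    rw [← coeff_phi, hp, coeff_zero]
  rw [hc, map_zero, map_zero, zero_mul]

/-- every balanced exponent is a margin -/
lemma exists_margin : ∀ (n : ℕ) (μ : (Fin 3 ⊕ Fin 3) →₀ ℕ),
    (∑ i, μ (Sum.inl i)) = n → (∑ j, μ (Sum.inr j)) = n → ∃ d, margin d = μ := by
  intro n
  induction n with
  | zero =>
    intro μ h1 h2
    refine ⟨0, ?_⟩
    ext x
    have hz : ∀ y, μ y = 0 := by
      intro y
      cases y with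
      | inl i =>
        have := Finset.sum_eq_zero_iff.mp h1 i (Finset.mem_univ i)
        exact this
      | inr j =>
        have := Finset.sum_eq_zero_iff.mp h2 j (Finset.mem_univ j)
        exact this
    rw [hz x]
    cases x <;> simp [margin_apply_inl, margin_apply_inr]
  | succ n ih =>
    intro μ h1 h2
    have hi : ∃ i, 0 < μ (Sum.inl i) := by
      by_contra hc
      push_neg at hc
      have : ∑ i, μ (Sum.inl i) = 0 := Finset.sum_eq_zero (fun i _ => Nat.le_zero.mp (hc i))
      omega
    have hj : ∃ j, 0 < μ (Sum.inr j) := by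
      by_contra hc
      push_neg at hc
      have : ∑ j, μ (Sum.inr j) = 0 := Finset.sum_eq_zero (fun j _ => Nat.le_zero.mp (hc j))
      omega
    obtain ⟨i, hi⟩ := hi
    obtain ⟨j, hj⟩ := hj
    set μ' : (Fin 3 ⊕ Fin 3) →₀ ℕ := Finsupp.equivFunOnFinite.symm
      (fun x => if Sum.inl i = x then μ x - 1 else if Sum.inr j = x then μ x - 1 else μ x)
      with hμ'
    have hμ'x : ∀ x, μ' x =
        if Sum.inl i = x then μ x - 1 else if Sum.inr j = x then μ x - 1 else μ x :=
      fun _ => rfl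
    have hdec : μ = μ' + Finsupp.single (Sum.inl i) 1 + Finsupp.single (Sum.inr j) 1 := by
      ext x
      simp only [Finsupp.add_apply, Finsupp.single_apply, hμ'x]
      split_ifs with hx1 hx2 hx3
      · exact absurd (hx1.trans hx2.symm) (by simp)
      · subst hx1; omega
      · subst hx3; omega
      · omega
    have hs1 : ∑ i', μ' (Sum.inl i') = n := by
      have : ∀ i', μ (Sum.inl i') = μ' (Sum.inl i') + (if i = i' then 1 else 0) := by
        intro i'
        rw [hμ'x]
        by_cases h : i = i'
        · subst h; simp; omega
        · simp [h, fun hh : Sum.inl i = Sum.inl i' => h (Sum.inl.inj hh)]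
      rw [Finset.sum_congr rfl (fun i' _ => this i')] at h1
      rw [Finset.sum_add_distrib, Finset.sum_ite_eq] at h1
      simp at h1
      omega
    have hs2 : ∑ j', μ' (Sum.inr j') = n := by
      have : ∀ j', μ (Sum.inr j') = μ' (Sum.inr j') + (if j = j' then 1 else 0) := by
        intro j'
        rw [hμ'x]
        by_cases h : j = j'
        · subst h; simp; omega
        · simp [h, fun hh : Sum.inr j = Sum.inr j' => h (Sum.inr.inj hh)]
      rw [Finset.sum_congr rfl (fun j' _ => this j')] at h2
      rw [Finset.sum_add_distrib, Finset.sum_ite_eq] at h2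
      simp at h2
      omega
    obtain ⟨d', hd'⟩ := ih μ' hs1 hs2
    refine ⟨d' + Finsupp.single (i, j) 1, ?_⟩
    rw [margin_add, margin_single, hd', hdec, add_assoc]

lemma balanced_sub (m e : (Fin 3 ⊕ Fin 3) →₀ ℕ) (hle : e ≤ m)
    (hm : ∑ i, m (Sum.inl i) = ∑ j, m (Sum.inr j))
    (he : ∑ i, e (Sum.inl i) = ∑ j, e (Sum.inr j)) :
    ∑ i, (m - e) (Sum.inl i) = ∑ j, (m - e) (Sum.inr j) := by
  have h := Finsupp.le_def.mp hle
  have h1 := h (Sum.inl 0); have h2 := h (Sum.inl 1); have h3 := h (Sum.inl 2)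
  have h4 := h (Sum.inr 0); have h5 := h (Sum.inr 1); have h6 := h (Sum.inr 2)
  simp only [Fin.sum_univ_three, Finsupp.tsub_apply] at *
  omega

lemma phi_preimage_sum (s : Finset ((Fin 3 ⊕ Fin 3) →₀ ℕ))
    (f : ((Fin 3 ⊕ Fin 3) →₀ ℕ) → ((Fin 3 ⊕ Fin 3) →₀ ℕ))
    (c : ((Fin 3 ⊕ Fin 3) →₀ ℕ) → k)
    (hbal : ∀ m ∈ s, ∑ i, (f m) (Sum.inl i) = ∑ j, (f m) (Sum.inr j)) :
    ∃ q, phi k q = ∑ m ∈ s, monomial (f m) (c m) := by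
  classical
  have hex : ∀ m ∈ s, ∃ d, margin d = f m := fun m hm =>
    exists_margin (∑ i, (f m) (Sum.inl i)) (f m) rfl (hbal m hm).symm
  choose! d hd using hex
  refine ⟨∑ m ∈ s, monomial (d m) (c m), ?_⟩
  rw [map_sum]
  exact Finset.sum_congr rfl fun m hm => by rw [phi_monomial, hd m hm]

lemma phi_X_pow (i j : Fin 3) (m : ℕ) :
    phi k (X (i, j) ^ m) = monomial (margin (Finsupp.single (i, j) m)) 1 := by
  rw [X_pow_eq_monomial, phi_monomial]

lemma margin_coord_le (nn : ℕ) (jj : Fin 3) (hjj : jj ≠ 2) (m : (Fin 3 ⊕ Fin 3) →₀ ℕ)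
    (x : Fin 3 ⊕ Fin 3)
    (hx : (margin (Finsupp.single ((0 : Fin 3), jj) nn)) x
      ≤ (margin (Finsupp.single ((2 : Fin 3), (2 : Fin 3)) 1)) x + m x) :
    (margin (Finsupp.single ((0 : Fin 3), jj) nn)) x ≤ m x := by
  simp only [margin_single] at hx ⊢
  rcases x with i | j
  · fin_cases i <;>
      simp only [Finsupp.add_apply, Finsupp.single_apply] at hx ⊢ <;>
      simp_all <;> omega
  · fin_cases j <;>
      simp only [Finsupp.add_apply, Finsupp.single_apply] at hx ⊢ <;>
      simp_all <;> omega

theorem quot_key (n : ℕ) (u : MvPolynomial (Fin 3 × Fin 3) k ⧸ DetIdeal k)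
    (hu : Ideal.Quotient.mk (DetIdeal k) (X (2, 2)) * u ∈
      Ideal.span {Ideal.Quotient.mk (DetIdeal k) (X (0, 0)) ^ n,
        Ideal.Quotient.mk (DetIdeal k) (X (0, 1)) ^ n}) :
    u ∈ Ideal.span {Ideal.Quotient.mk (DetIdeal k) (X (0, 0)) ^ n,
      Ideal.Quotient.mk (DetIdeal k) (X (0, 1)) ^ n} := by
  classical
  obtain ⟨p, rfl⟩ := Ideal.Quotient.mk_surjective u
  obtain ⟨a, b, hab⟩ := Ideal.mem_span_pair.mp hu
  obtain ⟨pa, rfl⟩ := Ideal.Quotient.mk_surjective a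
  obtain ⟨pb, rfl⟩ := Ideal.Quotient.mk_surjective b
  have hmem : pa * X (0, 0) ^ n + pb * X (0, 1) ^ n - X (2, 2) * p ∈ DetIdeal k := by
    rw [← Ideal.Quotient.eq_zero_iff_mem]
    simp only [map_sub, map_add, map_mul, map_pow]
    rw [hab]
    exact sub_self _
  have hker : ∀ r ∈ DetIdeal k, phi k r = 0 := by
    intro r hr
    suffices h : DetIdeal k ≤ RingHom.ker (phi k).toRingHom from h hr
    rw [DetIdeal, Ideal.span_le]
    rintro f ⟨i, j, a2, b2, hij2, hab2, rfl⟩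
    simp only [SetLike.mem_coe, RingHom.mem_ker, AlgHom.toRingHom_eq_coe,
      RingHom.coe_coe, map_sub, map_mul]
    have hX : ∀ i' j' : Fin 3, phi k (X (i', j')) = X (Sum.inl i') * X (Sum.inr j') := by
      intro i' j'; simp [phi]
    rw [hX, hX, hX, hX]
    ring
  -- notation for exponents
  set e0m := margin (Finsupp.single ((0 : Fin 3), (0 : Fin 3)) n) with he0m
  set e1m := margin (Finsupp.single ((0 : Fin 3), (1 : Fin 3)) n) with he1m
  set e22m := margin (Finsupp.single ((2 : Fin 3), (2 : Fin 3)) 1) with he22m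
  have hX22 : phi k (X ((2 : Fin 3), (2 : Fin 3))) = monomial e22m 1 := by
    have := phi_X_pow k 2 2 1
    rwa [pow_one] at this
  have hFid : monomial e22m 1 * phi k p
      = monomial e0m 1 * phi k pa + monomial e1m 1 * phi k pb := by
    have h := hker _ hmem
    simp only [map_sub, map_add, map_mul, phi_X_pow, hX22] at h
    rw [← he0m, ← he1m] at h
    linear_combination -h
  have hspan : monomial e22m 1 * phi k p
      ∈ Ideal.span ((fun s => monomial s (1 : k)) '' {e0m, e1m}) := by
    rw [Set.image_insert_eq, Set.image_singleton]
    exact Ideal.mem_span_pair.mpr ⟨phi k pa, phi k pb, by linear_combination -hFid⟩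
  have hdvd : ∀ m ∈ (phi k p).support, e0m ≤ m ∨ e1m ≤ m := by
    intro m hm
    have hc : coeff (e22m + m) (monomial e22m 1 * phi k p) ≠ 0 := by
      rw [coeff_monomial_mul, one_mul]
      exact mem_support_iff.mp hm
    obtain ⟨si, hsi, hle⟩ := mem_ideal_span_monomial_image.mp hspan _ (mem_support_iff.mpr hc)
    have hcoord : ∀ (x : Fin 3 ⊕ Fin 3) (e' : (Fin 3 ⊕ Fin 3) →₀ ℕ),
        (e' = e0m ∨ e' = e1m) → e' x ≤ e22m x + m x → e' x ≤ m x := by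
      intro x e' he' hx
      rcases he' with rfl | rfl
      · rw [he0m] at hx ⊢
        rw [he22m] at hx
        exact margin_coord_le n 0 (by decide) m x hx
      · rw [he1m] at hx ⊢
        rw [he22m] at hx
        exact margin_coord_le n 1 (by decide) m x hx
    rcases hsi with rfl | rfl
    · left
      refine Finsupp.le_def.mpr fun x => hcoord x _ (Or.inl rfl) ?_
      have := Finsupp.le_def.mp hle x
      rwa [Finsupp.add_apply] at this
    · right
      refine Finsupp.le_def.mpr fun x => hcoord x _ (Or.inr rfl) ?_
      have := Finsupp.le_def.mp hle x
      rwa [Finsupp.add_apply] at this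
  -- support of phi p is balanced
  have hbal : ∀ m ∈ (phi k p).support, ∑ i, m (Sum.inl i) = ∑ j, m (Sum.inr j) := by
    intro m hm
    have hc : coeff m (phi k p) ≠ 0 := mem_support_iff.mp hm
    rw [coeff_phi] at hc
    obtain ⟨d, hd, _⟩ := Finset.exists_ne_zero_of_sum_ne_zero hc
    have hdm := (Finset.mem_filter.mp hd).2
    rw [← hdm]
    exact margin_balanced d
  -- decomposition
  set s1 := (phi k p).support.filter (fun m => e0m ≤ m) with hs1
  set s2 := (phi k p).support.filter (fun m => ¬ e0m ≤ m) with hs2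
  have hF : phi k p = (∑ m ∈ s1, monomial m (coeff m (phi k p)))
      + ∑ m ∈ s2, monomial m (coeff m (phi k p)) := by
    rw [hs1, hs2, Finset.sum_filter_add_sum_filter_not]
    exact (phi k p).as_sum
  have hdiv1 : ∑ m ∈ s1, monomial m (coeff m (phi k p))
      = monomial e0m 1 * ∑ m ∈ s1, monomial (m - e0m) (coeff m (phi k p)) := by
    rw [Finset.mul_sum]
    refine Finset.sum_congr rfl fun m hm => ?_
    rw [monomial_mul, one_mul, add_tsub_cancel_of_le (Finset.mem_filter.mp hm).2]
  have hdiv2 : ∑ m ∈ s2, monomial m (coeff m (phi k p))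
      = monomial e1m 1 * ∑ m ∈ s2, monomial (m - e1m) (coeff m (phi k p)) := by
    rw [Finset.mul_sum]
    refine Finset.sum_congr rfl fun m hm => ?_
    have hm' := Finset.mem_filter.mp hm
    have hle : e1m ≤ m := (hdvd m hm'.1).resolve_left hm'.2
    rw [monomial_mul, one_mul, add_tsub_cancel_of_le hle]
  -- preimages
  obtain ⟨qa, hqa⟩ := phi_preimage_sum k s1 (fun m => m - e0m) (fun m => coeff m (phi k p))
    (fun m hm => balanced_sub m e0m (Finset.mem_filter.mp hm).2
      (hbal m (Finset.mem_filter.mp hm).1) (margin_balanced _))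
  obtain ⟨qb, hqb⟩ := phi_preimage_sum k s2 (fun m => m - e1m) (fun m => coeff m (phi k p))
    (fun m hm => balanced_sub m e1m
      ((hdvd m (Finset.mem_filter.mp hm).1).resolve_left (Finset.mem_filter.mp hm).2)
      (hbal m (Finset.mem_filter.mp hm).1) (margin_balanced _))
  have hz : phi k (p - (X (0, 0) ^ n * qa + X (0, 1) ^ n * qb)) = 0 := by
    have hrepr : phi k p = monomial e0m 1 * phi k qa + monomial e1m 1 * phi k qb := by
      rw [hqa, hqb, ← hdiv1, ← hdiv2]
      exact hF
    rw [map_sub, map_add, map_mul, map_mul, phi_X_pow, phi_X_pow, ← he0m, ← he1m, hrepr]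
    ring
  have hmk := mk_eq_zero_of_phi_eq_zero k _ hz
  rw [map_sub, sub_eq_zero] at hmk
  rw [hmk]
  simp only [map_add, map_mul, map_pow]
  exact Ideal.mem_span_pair.mpr
    ⟨Ideal.Quotient.mk (DetIdeal k) qa, Ideal.Quotient.mk (DetIdeal k) qb, by ring⟩

end DetAux

/-- **Lemma 3.4 (Gröbner basis part).**  Let `k` be an arbitrary field and `A = k[X]/I_2` the
determinantal ring of 2×2 minors of the generic 3×3 matrix.  Then for every `n ≥ 2`, the
element `x_{33}` is a nonzerodivisor on `A/(x_{11}^n, x_{12}^n)`. -/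
theorem x33_regular_on_quotient
    (k : Type u) [Field k] (n : ℕ) (hn : 2 ≤ n) :
    IsSMulRegular (DetRing k ⧸ Ideal.span {xvar k 0 0 ^ n, xvar k 0 1 ^ n}) (xvar k 2 2) := by
  intro u v huv
  obtain ⟨y, rfl⟩ := Ideal.Quotient.mk_surjective u
  obtain ⟨z, rfl⟩ := Ideal.Quotient.mk_surjective v
  have hsm : ∀ w : DetRing k,
      xvar k 2 2 • Ideal.Quotient.mk (Ideal.span {xvar k 0 0 ^ n, xvar k 0 1 ^ n}) w
        = Ideal.Quotient.mk (Ideal.span {xvar k 0 0 ^ n, xvar k 0 1 ^ n}) (xvar k 2 2 * w) :=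
    fun w => rfl
  simp only [hsm] at huv
  rw [Ideal.Quotient.eq] at huv ⊢
  rw [← mul_sub] at huv
  exact DetAux.quot_key k n (y - z) huv

end
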